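/- arXiv:2201.00881 — 3 statements merged into one kernel-verified Lean document; each statement's English description precedes it below -/
import Mathlib

section
/- Let n, d, m be integers with d ≥ 2, n ≥ 2d, gcd(d, n) = 1 and m ≥ 1, and let T = m·n jobs be scheduled by the round-robin policy with blocks B_1, …, B_T. Then for each k with 1 ≤ k ≤ d−1, the number of indices i ∈ {2, …, T} with |B_1 ∩ B_i| = k equals 2m, and the number of indices i ∈ {2, …, T} with |B_1 ∩ B_i| = d equals m − 1; all remaining indices satisfy |B_1 ∩ B_i| = 0. -/
open Finset

lemma overlap_card (n d v : ℕ) (hd : 2 ≤ d) (hn : 2*d ≤ n) (hv : v < n) :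
    (((Finset.range d).image (fun j : ℕ => (j : ZMod n))) ∩
     ((Finset.range d).image (fun j => ((v + j : ℕ) : ZMod n)))).card
    = (d - v) + (v + d - n) := by
  haveI : NeZero n := ⟨by omega⟩
  have hval : ∀ j : ℕ, j < n → ((j : ZMod n)).val = j := fun j hj => by
    rw [ZMod.val_natCast, Nat.mod_eq_of_lt hj]
  have key : ((Finset.range d).image (fun j : ℕ => (j : ZMod n))) ∩
      ((Finset.range d).image (fun j => ((v + j : ℕ) : ZMod n)))
      = ((Finset.range d).filter
          (fun j : ℕ => (j:ZMod n) ∈ (Finset.range d).image (fun l => ((v + l : ℕ) : ZMod n)))).image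
          (fun j : ℕ => (j : ZMod n)) := by
    ext x
    simp only [Finset.mem_inter, Finset.mem_image, Finset.mem_filter]
    constructor
    · rintro ⟨⟨j, hj, rfl⟩, h2⟩
      exact ⟨j, ⟨hj, h2⟩, rfl⟩
    · rintro ⟨j, ⟨hj, h2⟩, rfl⟩
      exact ⟨⟨j, hj, rfl⟩, h2⟩
  rw [key, Finset.card_image_of_injOn]
  swap
  · intro a ha b hb hab
    simp only [Finset.coe_filter, Set.mem_setOf_eq, Finset.mem_range] at ha hb
    have := congrArg ZMod.val hab
    rwa [hval a (by omega), hval b (by omega)] at this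
  have hset : (Finset.range d).filter
      (fun j : ℕ => (j:ZMod n) ∈ (Finset.range d).image (fun l => ((v + l : ℕ) : ZMod n)))
      = Finset.Ico v d ∪ Finset.range (v + d - n) := by
    ext j
    simp only [Finset.mem_filter, Finset.mem_range, Finset.mem_image, Finset.mem_union,
      Finset.mem_Ico]
    constructor
    · rintro ⟨hj, l, hl, hcast⟩
      have hmod : (v + l) % n = j % n := (ZMod.natCast_eq_natCast_iff' _ _ _).mp hcast
      rw [Nat.mod_eq_of_lt (show j < n by omega)] at hmod
      rcases Nat.lt_or_ge (v + l) n with h | h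
      · rw [Nat.mod_eq_of_lt h] at hmod; omega
      · rw [Nat.mod_eq_sub_mod h, Nat.mod_eq_of_lt (by omega)] at hmod
        omega
    · rintro (⟨h1, h2⟩ | h1)
      · exact ⟨h2, j - v, by omega, by rw [show v + (j - v) = j by omega]⟩
      · refine ⟨by omega, j + n - v, by omega, ?_⟩
        rw [show v + (j + n - v) = j + n by omega]
        push_cast [ZMod.natCast_self]
        ring
  rw [hset]
  rcases Nat.lt_or_ge v d with h | h
  · have h0 : v + d - n = 0 := by omega
    simp [h0, Nat.card_Ico]
  · rw [Finset.Ico_eq_empty (by omega), Finset.empty_union, Finset.card_range]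
    omega


lemma count_mod (n m t : ℕ) (hn : 0 < n) (hm : 1 ≤ m) (ht : t < n) :
    ((Finset.Icc 1 (m*n - 1)).filter (fun i => i % n = t)).card
    = if t = 0 then m - 1 else m := by
  have hmn : 1 ≤ m * n := Nat.one_le_iff_ne_zero.mpr (by positivity)
  have hrange : ((Finset.range (m*n)).filter (fun i => i % n = t)).card = m := by
    have himg : (Finset.range m).image (fun q => q*n + t)
        = (Finset.range (m*n)).filter (fun i => i % n = t) := by
      ext i
      simp only [Finset.mem_image, Finset.mem_filter, Finset.mem_range]
      constructor
      · rintro ⟨q, hq, rfl⟩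
        refine ⟨?_, ?_⟩
        · calc q*n + t < q*n + n := by omega
            _ = (q+1)*n := by ring
            _ ≤ m*n := Nat.mul_le_mul_right n (by omega)
        · rw [Nat.add_mod, Nat.mul_mod_left, Nat.zero_add, Nat.mod_mod_of_dvd,
            Nat.mod_eq_of_lt ht]
          exact dvd_refl n
      · rintro ⟨h1, h2⟩
        refine ⟨i / n, ?_, ?_⟩
        · exact Nat.div_lt_of_lt_mul (by rwa [mul_comm] at h1)
        · have := Nat.div_add_mod i n
          rw [mul_comm]
          omega
    rw [← himg, Finset.card_image_of_injOn, Finset.card_range]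
    intro a _ b _ hab
    have hab' : a * n + t = b * n + t := hab
    exact Nat.eq_of_mul_eq_mul_right hn (by omega)
  have herase : Finset.Icc 1 (m*n - 1) = (Finset.range (m*n)).erase 0 := by
    ext i
    simp only [Finset.mem_Icc, Finset.mem_erase, Finset.mem_range]
    omega
  rw [herase, Finset.filter_erase]
  by_cases h0 : t = 0
  · rw [if_pos h0]
    rw [Finset.card_erase_of_mem, hrange]
    simp only [Finset.mem_filter, Finset.mem_range]
    exact ⟨by omega, by simp [h0]⟩
  · rw [if_neg h0]
    rw [Finset.erase_eq_of_notMem, hrange]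
    simp only [Finset.mem_filter, Finset.mem_range]
    rintro ⟨-, h⟩
    simp [Nat.zero_mod] at h
    exact h0 h.symm



lemma count_mul_mod (n d m s : ℕ) (hn : 0 < n) (hgcd : Nat.gcd d n = 1) (hm : 1 ≤ m)
    (hs : s < n) :
    ((Finset.Icc 1 (m*n - 1)).filter (fun i => (i*d) % n = s)).card
    = if s = 0 then m - 1 else m := by
  haveI : NeZero n := ⟨by omega⟩
  have hu : (d : ZMod n) * (d : ZMod n)⁻¹ = 1 := ZMod.coe_mul_inv_eq_one d hgcd
  set x : ZMod n := (d : ZMod n)⁻¹ * (s : ZMod n) with hx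
  set e : ℕ := x.val with he
  have hev : e < n := ZMod.val_lt x
  have hex : ((e : ℕ) : ZMod n) = x := by rw [he, ZMod.natCast_val, ZMod.cast_id]
  have hequiv : ∀ i : ℕ, (i*d) % n = s ↔ i % n = e := by
    intro i
    rw [show (i*d) % n = s ↔ (i*d) % n = s % n from by rw [Nat.mod_eq_of_lt hs],
      show i % n = e ↔ i % n = e % n from by rw [Nat.mod_eq_of_lt hev],
      ← ZMod.natCast_eq_natCast_iff', ← ZMod.natCast_eq_natCast_iff']
    push_cast
    rw [hex]
    constructor
    · intro h
      rw [hx, ← h]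
      calc (i : ZMod n) = ((d:ZMod n) * (d:ZMod n)⁻¹) * i := by rw [hu, one_mul]
        _ = (d:ZMod n)⁻¹ * ((i:ZMod n) * d) := by ring
    · intro h
      rw [h, hx]
      calc (d:ZMod n)⁻¹ * s * d = ((d:ZMod n) * (d:ZMod n)⁻¹) * s := by ring
        _ = s := by rw [hu, one_mul]
  have hs0 : (s = 0) ↔ (e = 0) := by
    constructor
    · intro h
      subst h
      simp [he, hx]
    · intro h
      have : ((s:ℕ) : ZMod n) = 0 := by
        have hx0 : x = 0 := by rw [← hex, h]; simp
        have : ((d:ZMod n)) * x = s := by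
          rw [hx]
          calc (d:ZMod n) * ((d:ZMod n)⁻¹ * s) = ((d:ZMod n) * (d:ZMod n)⁻¹) * s := by ring
            _ = s := by rw [hu, one_mul]
        rw [hx0, mul_zero] at this
        exact this.symm
      have := (ZMod.natCast_eq_natCast_iff' s 0 n).mp (by simpa using this)
      simpa [Nat.mod_eq_of_lt hs] using this
  have hfe : (Finset.Icc 1 (m*n - 1)).filter (fun i => (i*d) % n = s)
      = (Finset.Icc 1 (m*n-1)).filter (fun i => i % n = e) :=
    Finset.filter_congr (fun i _ => by simp [hequiv i])
  rw [hfe, count_mod n m e hn hm hev, if_congr hs0.symm rfl rfl]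





/-- Overlap distribution of the round-robin policy with `T = m·n` jobs and blocks
`B i = {((i-1)·d + j) mod n : j < d}`: for each `1 ≤ k ≤ d-1` exactly `2m` of the
indices `i ∈ {2,…,T}` satisfy `|B 1 ∩ B i| = k`, exactly `m-1` of them satisfy
`|B 1 ∩ B i| = d`, and all remaining indices satisfy `|B 1 ∩ B i| = 0`. -/
theorem roundRobin_overlap_distribution (n d m : ℕ) (hd : 2 ≤ d) (hn : 2 * d ≤ n)
    (hgcd : Nat.gcd d n = 1) (hm : 1 ≤ m) (T : ℕ) (hT : T = m * n)
    (B : ℕ → Finset (ZMod n))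
    (hB : ∀ i : ℕ, B i = (Finset.range d).image (fun j => (((i - 1) * d + j : ℕ) : ZMod n))) :
    (∀ k : ℕ, 1 ≤ k → k ≤ d - 1 →
      ((Finset.Icc 2 T).filter (fun i => (B 1 ∩ B i).card = k)).card = 2 * m) ∧
    ((Finset.Icc 2 T).filter (fun i => (B 1 ∩ B i).card = d)).card = m - 1 ∧
    ((Finset.Icc 2 T).filter (fun i => (B 1 ∩ B i).card = 0)).card
      = (T - 1) - 2 * m * (d - 1) - (m - 1) := by
  haveI : NeZero n := ⟨by omega⟩
  have hn0 : 0 < n := by omega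
  have hT1 : 1 ≤ T := by subst hT; exact Nat.one_le_iff_ne_zero.mpr (by positivity)
  set f : ℕ → ℕ := fun i => (i*d) % n with hf
  have hfn : ∀ i, f i < n := fun i => Nat.mod_lt _ hn0
  set c : ℕ → ℕ := fun i => (d - f i) + (f i + d - n) with hc
  -- the cardinality of the intersection
  have hcard : ∀ i : ℕ, (B 1 ∩ B (i+1)).card = c i := by
    intro i
    have hB1 : B 1 = (Finset.range d).image (fun j : ℕ => (j : ZMod n)) := by
      rw [hB 1]
      apply Finset.image_congr
      intro j _
      norm_num
    have hBi : B (i+1) = (Finset.range d).image (fun j : ℕ => ((f i + j : ℕ) : ZMod n)) := by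
      rw [hB (i+1)]
      apply Finset.image_congr
      intro j _
      simp only [Nat.add_sub_cancel]
      rw [ZMod.natCast_eq_natCast_iff']
      conv_lhs => rw [Nat.add_mod]
      conv_rhs => rw [Nat.add_mod]
      rw [hf]
      rw [Nat.mod_mod_of_dvd _ (dvd_refl n)]
    rw [hB1, hBi]
    exact overlap_card n d (f i) hd hn (hfn i)
  -- reindexing Icc 2 T to Icc 1 (T-1)
  have hmap : ∀ (p : ℕ → Prop) (_ : DecidablePred p),
      ((Finset.Icc 2 T).filter p).card = ((Finset.Icc 1 (T-1)).filter (fun i => p (i+1))).card := by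
    intro p _
    have hIcc : Finset.Icc 2 T = (Finset.Icc 1 (T-1)).map (addRightEmbedding 1) := by
      rw [Finset.map_add_right_Icc]
      congr 1
      omega
    rw [hIcc, Finset.filter_map, Finset.card_map]
    congr 1
  -- counts at the base level
  have hTn : T - 1 = m * n - 1 := by rw [hT]
  have hA : ∀ k : ℕ, 1 ≤ k → k ≤ d - 1 →
      ((Finset.Icc 1 (T-1)).filter (fun i => c i = k)).card = 2*m := by
    intro k hk1 hk2
    have hchar : ∀ i : ℕ, (c i = k) ↔ (f i = d - k ∨ f i = n - (d - k)) := by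
      intro i
      have := hfn i
      simp only [hc]
      omega
    rw [Finset.filter_congr (fun i _ => by rw [hchar i]), Finset.filter_or,
      Finset.card_union_of_disjoint]
    · rw [hTn]
      rw [count_mul_mod n d m (d - k) hn0 hgcd hm (by omega),
        count_mul_mod n d m (n - (d - k)) hn0 hgcd hm (by omega)]
      rw [if_neg (by omega), if_neg (by omega)]
      omega
    · rw [Finset.disjoint_left]
      intro x hx hy
      rw [Finset.mem_filter] at hx hy
      omega
  have hAd : ((Finset.Icc 1 (T-1)).filter (fun i => c i = d)).card = m - 1 := by
    have hchar : ∀ i : ℕ, (c i = d) ↔ (f i = 0) := by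
      intro i
      have := hfn i
      simp only [hc]
      omega
    rw [Finset.filter_congr (fun i _ => by rw [hchar i]), hTn,
      count_mul_mod n d m 0 hn0 hgcd hm (by omega), if_pos rfl]
  refine ⟨?_, ?_, ?_⟩
  · intro k hk1 hk2
    rw [hmap _ inferInstance, Finset.filter_congr (fun i _ => by rw [hcard i])]
    exact hA k hk1 hk2
  · rw [hmap _ inferInstance, Finset.filter_congr (fun i _ => by rw [hcard i])]
    exact hAd
  · rw [hmap _ inferInstance, Finset.filter_congr (fun i _ => by rw [hcard i])]
    set A := Finset.Icc 1 (T-1) with hA'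
    have hcA : A.card = T - 1 := by rw [hA', Nat.card_Icc]; omega
    have hS : (A.filter (fun i => ¬ c i = 0)).card = (m-1) + (d-1)*(2*m) := by
      rw [Finset.card_eq_sum_card_fiberwise (f := c) (t := Finset.Icc 1 d)
        (fun x hx => by
          rw [Finset.mem_coe, Finset.mem_filter] at hx
          have := hfn x
          rw [Finset.mem_coe, Finset.mem_Icc]
          constructor
          · omega
          · simp only [hc]; omega)]
      have hterm : ∀ b ∈ Finset.Icc 1 d,
          ((A.filter (fun i => ¬ c i = 0)).filter (fun i => c i = b)).card
            = (A.filter (fun i => c i = b)).card := by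
        intro b hb
        rw [Finset.mem_Icc] at hb
        rw [Finset.filter_filter]
        congr 1
        apply Finset.filter_congr
        intro i _
        constructor
        · rintro ⟨-, h⟩; exact h
        · intro h; exact ⟨by omega, h⟩
      rw [Finset.sum_congr rfl hterm]
      rw [show Finset.Icc 1 d = insert d (Finset.Icc 1 (d-1)) from by
        ext b; rw [Finset.mem_insert, Finset.mem_Icc, Finset.mem_Icc]; omega]
      rw [Finset.sum_insert (by rw [Finset.mem_Icc]; omega)]
      have hsum : ∑ b ∈ Finset.Icc 1 (d-1), (A.filter (fun i => c i = b)).card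
          = (d-1)*(2*m) := by
        calc ∑ b ∈ Finset.Icc 1 (d-1), (A.filter (fun i => c i = b)).card
            = ∑ _b ∈ Finset.Icc 1 (d-1), 2*m :=
              Finset.sum_congr rfl
                (fun b hb => hA b (Finset.mem_Icc.mp hb).1 (Finset.mem_Icc.mp hb).2)
          _ = (d-1)*(2*m) := by
              rw [Finset.sum_const, Nat.card_Icc, smul_eq_mul,
                show d - 1 + 1 - 1 = d - 1 from by omega]
      rw [hsum, hAd]
    have hsplit := Finset.card_filter_add_card_filter_not
      (s := A) (p := fun i => c i = 0)
    rw [hS, hcA] at hsplit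
    have hring : (d-1)*(2*m) = 2*m*(d-1) := by ring
    omega
end

section
/- Let n, d, m be integers with d ≥ 2, n ≥ 2d, gcd(d, n) = 1 and m ≥ 1, and let T = m·n jobs be scheduled by the round-robin policy with blocks B_1, …, B_T. Then ∑_{i=2}^{T} |B_1 ∩ B_i| = m·d² − d, and consequently the average overlap (∑_{i=2}^{T} |B_1 ∩ B_i|)/(T − 1) converges to d²/n as m → ∞; i.e., the average overlap factor of the round-robin policy is AOF_round-robin = n/d². -/
open Filter Finset
lemma sum_translate_inter_card {G : Type*} [AddCommGroup G] [Fintype G] [DecidableEq G]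
    (A : Finset G) :
    ∑ s : G, (A ∩ A.image (s + ·)).card = A.card ^ 2 := by
  have key : ∀ s : G, (A ∩ A.image (s + ·)) = A.filter (fun a => a - s ∈ A) := by
    intro s; ext a
    simp only [mem_inter, mem_image, mem_filter]
    constructor
    · rintro ⟨ha, x, hx, rfl⟩; exact ⟨ha, by simpa using hx⟩
    · rintro ⟨ha, h⟩; exact ⟨ha, ⟨a - s, h, by abel⟩⟩
  calc ∑ s : G, (A ∩ A.image (s + ·)).card
      = ∑ s : G, ∑ a ∈ A, if a - s ∈ A then 1 else 0 := by
        simp only [key, Finset.card_filter]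
    _ = ∑ a ∈ A, ∑ s : G, if a - s ∈ A then 1 else 0 := Finset.sum_comm
    _ = ∑ a ∈ A, A.card := by
        refine Finset.sum_congr rfl fun a _ => ?_
        rw [Fintype.sum_equiv (Equiv.subLeft a) _ (fun t => if t ∈ A then 1 else 0)
          (fun s => by simp)]
        simp [Finset.card_filter]
    _ = A.card ^ 2 := by rw [Finset.sum_const, smul_eq_mul, sq]

lemma roundRobin_reindex (n d : ℕ) [NeZero n] (hdu : IsUnit (d : ZMod n))
    (F : ZMod n → ℕ) :
    ∑ k ∈ Finset.range n, F ((k * d : ℕ)) = ∑ s : ZMod n, F s := by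
  refine Finset.sum_nbij' (fun k => ((k * d : ℕ) : ZMod n))
    (fun s => (s * (d : ZMod n)⁻¹).val) (fun a _ => Finset.mem_univ _)
    (fun s _ => Finset.mem_range.mpr (ZMod.val_lt _)) ?_ ?_ (fun a _ => rfl)
  · intro k hk
    rw [Finset.mem_range] at hk
    push_cast
    rw [mul_assoc, ZMod.mul_inv_of_unit _ hdu, mul_one, ZMod.val_cast_of_lt hk]
  · intro s _
    push_cast
    rw [ZMod.natCast_rightInverse _, mul_assoc, ZMod.inv_mul_of_unit _ hdu, mul_one]


/-- Average overlap factor of the round-robin policy: with `T = m·n` jobs and blocks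
`B i = {((i-1)·d + j) mod n : j < d}`, one has `∑_{i=2}^{T} |B 1 ∩ B i| = m·d² - d`,
and the average overlap `(∑_{i=2}^{T} |B 1 ∩ B i|)/(T-1)` converges to `d²/n` as
`m → ∞` (AOF_round-robin = n/d²). -/
theorem roundRobin_AOF (n d : ℕ) (hd : 2 ≤ d) (hn : 2 * d ≤ n)
    (hgcd : Nat.gcd d n = 1)
    (B : ℕ → Finset (ZMod n))
    (hB : ∀ i : ℕ, B i = (Finset.range d).image (fun j => (((i - 1) * d + j : ℕ) : ZMod n))) :
    (∀ m : ℕ, 1 ≤ m →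
      ∑ i ∈ Finset.Icc 2 (m * n), (B 1 ∩ B i).card = m * d ^ 2 - d) ∧
    Tendsto (fun m : ℕ =>
        (∑ i ∈ Finset.Icc 2 (m * n), ((B 1 ∩ B i).card : ℝ)) / ((m : ℝ) * n - 1))
      atTop (nhds ((d : ℝ) ^ 2 / n)) := by
  haveI : NeZero n := ⟨by omega⟩
  set A : Finset (ZMod n) := (Finset.range d).image (fun j : ℕ => (j : ZMod n)) with hA
  have hB1 : B 1 = A := by rw [hB 1]; simp [hA]
  have hcardA : A.card = d := by
    rw [hA, Finset.card_image_of_injOn, Finset.card_range]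
    intro a ha b hb h
    rw [Finset.mem_coe, Finset.mem_range] at ha hb
    have h' : (a : ZMod n).val = (b : ZMod n).val := congrArg ZMod.val h
    rwa [ZMod.val_cast_of_lt (by omega), ZMod.val_cast_of_lt (by omega)] at h'
  have hdu : IsUnit (d : ZMod n) := (ZMod.isUnit_iff_coprime d n).mpr hgcd
  set F : ZMod n → ℕ := fun s => (A ∩ A.image (s + ·)).card with hF
  have hBk : ∀ k : ℕ, B (k + 1) = A.image ((((k * d : ℕ) : ZMod n)) + ·) := by
    intro k
    rw [hB (k + 1), hA, Finset.image_image]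
    refine Finset.image_congr fun j _ => ?_
    simp only [Function.comp_apply, Nat.add_sub_cancel]
    push_cast
    ring
  have hf : ∀ k : ℕ, (B 1 ∩ B (k + 1)).card = F (((k * d : ℕ) : ZMod n)) := by
    intro k; rw [hB1, hBk]
  have hone : ∑ k ∈ Finset.range n, F (((k * d : ℕ) : ZMod n)) = d ^ 2 := by
    rw [roundRobin_reindex n d hdu F, hF]
    rw [sum_translate_inter_card A, hcardA]
  have hmn : ∀ m : ℕ, ∑ k ∈ Finset.range (m * n), F (((k * d : ℕ) : ZMod n)) = m * d ^ 2 := by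
    intro m
    induction m with
    | zero => simp
    | succ m ih =>
      rw [add_mul, one_mul, Finset.sum_range_add, ih]
      have : ∀ k ∈ Finset.range n,
          F (((m * n + k) * d : ℕ)) = F ((k * d : ℕ)) := by
        intro k _
        congr 1
        push_cast
        rw [ZMod.natCast_self]
        ring
      rw [Finset.sum_congr rfl this, hone]
      ring
  have key : ∀ m : ℕ, 1 ≤ m →
      ∑ i ∈ Finset.Icc 2 (m * n), (B 1 ∩ B i).card = m * d ^ 2 - d := by
    intro m hm1
    have h2 : ∑ i ∈ Finset.Icc 1 (m * n), (B 1 ∩ B i).card = m * d ^ 2 := by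
      rw [← Finset.Ico_add_one_right_eq_Icc, Finset.sum_Ico_eq_sum_range]
      rw [Nat.add_sub_cancel, ← hmn m]
      refine Finset.sum_congr rfl fun k _ => ?_
      rw [add_comm 1 k, hf k]
    have hsplit : Finset.Icc 1 (m * n) = insert 1 (Finset.Icc 2 (m * n)) := by
      ext i
      simp only [Finset.mem_Icc, Finset.mem_insert]
      have : 1 ≤ m * n := by
        calc 1 ≤ n := by omega
        _ ≤ m * n := Nat.le_mul_of_pos_left n hm1
      omega
    rw [hsplit, Finset.sum_insert (by simp)] at h2
    have hB11 : (B 1 ∩ B 1).card = d := by rw [Finset.inter_self, hB1, hcardA]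
    rw [hB11] at h2
    exact Nat.eq_sub_of_add_eq' h2
  refine ⟨key, ?_⟩
  have hinv : Tendsto (fun m : ℕ => ((m : ℝ))⁻¹) atTop (nhds 0) :=
    tendsto_inv_atTop_zero.comp tendsto_natCast_atTop_atTop
  have hnR : (4 : ℝ) ≤ (n : ℝ) := by exact_mod_cast (by omega : 4 ≤ n)
  have hlim : Tendsto (fun m : ℕ => ((d : ℝ) ^ 2 - d * (m : ℝ)⁻¹) / ((n : ℝ) - (m : ℝ)⁻¹))
      atTop (nhds ((d : ℝ) ^ 2 / n)) := by
    have h1 : Tendsto (fun m : ℕ => (d : ℝ) ^ 2 - d * (m : ℝ)⁻¹) atTop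
        (nhds ((d : ℝ) ^ 2 - d * 0)) := tendsto_const_nhds.sub (hinv.const_mul _)
    have h2 : Tendsto (fun m : ℕ => (n : ℝ) - (m : ℝ)⁻¹) atTop (nhds ((n : ℝ) - 0)) :=
      tendsto_const_nhds.sub hinv
    have h3 := h1.div h2 (by simp; linarith)
    simp only [mul_zero, sub_zero] at h3
    exact h3
  refine hlim.congr' ?_
  filter_upwards [eventually_ge_atTop 1] with m hm1
  have hm0 : (m : ℝ) ≠ 0 := Nat.cast_ne_zero.mpr (by omega)
  have hmR : (1 : ℝ) ≤ (m : ℝ) := by exact_mod_cast hm1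
  have hdle : d ≤ m * d ^ 2 := by
    calc d ≤ d ^ 2 := by nlinarith
    _ ≤ m * d ^ 2 := Nat.le_mul_of_pos_left _ hm1
  have hsum : (∑ i ∈ Finset.Icc 2 (m * n), ((B 1 ∩ B i).card : ℝ))
      = (m : ℝ) * d ^ 2 - d := by
    rw [← Nat.cast_sum, key m hm1, Nat.cast_sub hdle]
    push_cast
    ring
  rw [hsum]
  have hinvle : (m : ℝ)⁻¹ ≤ 1 := by
    rw [inv_le_one_iff₀]; right; exact hmR
  have hb : (n : ℝ) - (m : ℝ)⁻¹ ≠ 0 := by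
    have : (m : ℝ)⁻¹ > 0 := by positivity
    nlinarith
  have he : (m : ℝ) * n - 1 ≠ 0 := by nlinarith
  rw [div_eq_div_iff hb he]
  field_simp
end

section
/- Let n, d, m be integers with d ≥ 2, n ≥ 2d, gcd(d, n) = 1 and m ≥ 1, and let T = m·n jobs be scheduled by the round-robin policy with blocks B_1, …, B_T. Then ∑_{i=2}^{T} |B_1 ∩ B_i|² = (m−1)·d² + m·d(d−1)(2d−1)/3, and consequently the average squared overlap (∑_{i=2}^{T} |B_1 ∩ B_i|²)/(T − 1) converges to d(2d² + 1)/(3n) as m → ∞; i.e., the overlap diversity factor of the round-robin policy is ODF_round-robin = 3n/(d(2d² + 1)). -/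
open Filter Finset

lemma rr_count (n d j1 j2 : ℕ) (hn : 2*d ≤ n) (h1 : j1 < d) (h2 : j2 < d) :
    ((range n).filter (fun k => (k + j1) % n < d ∧ (k + j2) % n < d)).card
      = (d - max j1 j2) + min j1 j2 := by
  have key : ∀ k < n, ∀ j < d, ((k + j) % n < d ↔ (k + j < d ∨ n ≤ k + j)) := by
    intro k hk j hj
    rcases lt_or_ge (k + j) n with h | h
    · rw [Nat.mod_eq_of_lt h]; omega
    · have : (k + j) % n = k + j - n := by
        rw [Nat.mod_eq_sub_mod h, Nat.mod_eq_of_lt (by omega)]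
      omega
  have hset : (range n).filter (fun k => (k + j1) % n < d ∧ (k + j2) % n < d)
      = range (d - max j1 j2) ∪ Finset.Ico (n - min j1 j2) n := by
    ext k
    simp only [mem_filter, mem_range, mem_union, mem_Ico]
    constructor
    · rintro ⟨hk, hp1, hp2⟩
      rw [key k hk j1 h1] at hp1; rw [key k hk j2 h2] at hp2
      omega
    · intro h
      have hk : k < n := by omega
      refine ⟨hk, ?_, ?_⟩
      · rw [key k hk j1 h1]; omega
      · rw [key k hk j2 h2]; omega
  rw [hset, card_union_of_disjoint, card_range, Nat.card_Ico]
  · omega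
  · simp only [disjoint_left, mem_range, mem_Ico]
    intro k hk1 hk2
    omega


lemma rr_dsum (d D : ℕ) (h : d ≤ D) :
    6 * (∑ j1 ∈ range d, ∑ j2 ∈ range d, ((D - max j1 j2) + min j1 j2))
      + d*(d-1)*(4*d+1)
    = 6*d*d*D + d*(d-1)*(2*d-1) := by
  induction d with
  | zero => simp
  | succ e ih =>
    have he : e ≤ D := by omega
    have ihe := ih he
    have hbound : ∀ j1 ∈ range e, (∑ j2 ∈ range (e+1), ((D - max j1 j2) + min j1 j2))
        = (∑ j2 ∈ range e, ((D - max j1 j2) + min j1 j2)) + ((D - e) + j1) := by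
      intro j1 hj1
      simp only [mem_range] at hj1
      rw [sum_range_succ]
      congr 1
      rw [Nat.max_eq_right (by omega), Nat.min_eq_left (by omega)]
    have hsplit : (∑ x ∈ range e, ((D - e) + x)) = e*(D-e) + (∑ x ∈ range e, x) := by
      rw [sum_add_distrib, sum_const, card_range, smul_eq_mul]
    rw [sum_range_succ, sum_congr rfl hbound, sum_add_distrib, hsplit]
    have hlast : (∑ j2 ∈ range (e+1), ((D - max e j2) + min e j2))
        = (∑ j2 ∈ range e, ((D - e) + j2)) + ((D - e) + e) := by
      rw [sum_range_succ]
      congr 1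
      · exact sum_congr rfl fun j2 hj2 => by
          simp only [mem_range] at hj2
          rw [Nat.max_eq_left (by omega), Nat.min_eq_right (by omega)]
      · simp
    rw [hlast, hsplit]
    have hg : (∑ j ∈ range e, j) * 2 = e * (e - 1) := Finset.sum_range_id_mul_two e
    set S2 := ∑ j1 ∈ range e, ∑ j2 ∈ range e, ((D - max j1 j2) + min j1 j2) with hS2
    set G := ∑ x ∈ range e, x with hG
    rcases Nat.eq_zero_or_pos e with rfl | he1
    · simp [hS2, hG] at *
    · zify [he, he1, show 1 ≤ e + 1 by omega, show 1 ≤ 2*e by omega,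
        show 1 ≤ 2*(e+1) by omega] at ihe hg ⊢
      linear_combination ihe + 6 * hg


lemma rr_zsum (n : ℕ) [NeZero n] (f : ZMod n → ℕ) :
    ∑ a ∈ range n, f (a : ZMod n) = ∑ x : ZMod n, f x := by
  refine Finset.sum_nbij' (i := fun a => (a : ZMod n)) (j := fun x => x.val)
    ?_ ?_ ?_ ?_ ?_
  · intro a _; exact mem_univ _
  · intro x _; exact mem_range.mpr x.val_lt
  · intro a ha; exact ZMod.val_cast_of_lt (mem_range.mp ha)
  · intro x _; exact ZMod.natCast_rightInverse x
  · intro a _; rfl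

lemma rr_unit_sum (n d : ℕ) [NeZero n] (hgcd : Nat.gcd d n = 1) (f : ZMod n → ℕ) :
    ∑ x : ZMod n, f (x * (d : ZMod n)) = ∑ x : ZMod n, f x := by
  let u : (ZMod n)ˣ := ZMod.unitOfCoprime d hgcd
  have hb : Function.Bijective (fun x : ZMod n => x * (u : ZMod n)) := by
    constructor
    · intro a b hab
      simpa using congrArg (fun y => y * ((u⁻¹ : (ZMod n)ˣ) : ZMod n)) hab
    · intro y
      exact ⟨y * ((u⁻¹ : (ZMod n)ˣ) : ZMod n), by simp [mul_assoc]⟩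
  have := Fintype.sum_bijective _ hb (fun x => f (x * (d : ZMod n))) f
    (fun x => by simp [u, ZMod.coe_unitOfCoprime])
  simpa using this


lemma rr_card (n d : ℕ) [NeZero n] (hd : d ≤ n)
    (B : ℕ → Finset (ZMod n))
    (hB : ∀ i : ℕ, B i = (Finset.range d).image (fun j => (((i - 1) * d + j : ℕ) : ZMod n)))
    (i : ℕ) :
    (B 1 ∩ B i).card = ((range d).filter (fun j => ((i-1)*d + j) % n < d)).card := by
  have hB1 : ∀ x : ZMod n, x ∈ B 1 ↔ x.val < d := by
    intro x
    rw [hB 1]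
    simp only [mem_image, mem_range]
    constructor
    · rintro ⟨j, hj, rfl⟩
      have : (((1-1) * d + j : ℕ) : ZMod n) = (j : ℕ) := by norm_num
      rw [this, ZMod.val_cast_of_lt (lt_of_lt_of_le hj hd)]
      exact hj
    · intro h
      refine ⟨x.val, h, ?_⟩
      have : ((1-1) * d + x.val : ℕ) = x.val := by norm_num
      rw [this]
      exact ZMod.natCast_rightInverse x
  have hinj : Set.InjOn (fun j : ℕ => (((i - 1) * d + j : ℕ) : ZMod n)) (range d) := by
    intro a ha b hb hab
    simp only [coe_range, Set.mem_Iio] at ha hb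
    simp only [Nat.cast_add, Nat.cast_mul] at hab
    have h2 : ((a : ℕ) : ZMod n) = ((b : ℕ) : ZMod n) := by
      exact add_left_cancel hab
    have := congrArg ZMod.val h2
    rwa [ZMod.val_cast_of_lt (lt_of_lt_of_le ha hd),
      ZMod.val_cast_of_lt (lt_of_lt_of_le hb hd)] at this
  have hiset : B 1 ∩ B i
      = ((range d).filter (fun j => ((i-1)*d + j) % n < d)).image
          (fun j : ℕ => (((i - 1) * d + j : ℕ) : ZMod n)) := by
    rw [hB i]
    ext x
    simp only [mem_inter, mem_image, mem_filter, mem_range]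
    constructor
    · rintro ⟨hx1, j, hj, rfl⟩
      refine ⟨j, ⟨hj, ?_⟩, rfl⟩
      rw [← ZMod.val_natCast]
      exact (hB1 _).mp hx1
    · rintro ⟨j, ⟨hj, hjlt⟩, rfl⟩
      refine ⟨(hB1 _).mpr ?_, j, hj, rfl⟩
      rwa [ZMod.val_natCast]
  rw [hiset, Finset.card_image_of_injOn (hinj.mono ?_)]
  intro j hj
  simp only [coe_filter, coe_range, Set.mem_setOf_eq, Set.mem_Iio] at hj ⊢
  exact hj.1 |> fun h => by simpa using (Finset.mem_range.mp hj.1)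

lemma rr_shift (n : ℕ) (g : ℕ → ℕ) (hper : ∀ a, g (a + n) = g a) (m i : ℕ) :
    g (m * n + i) = g i := by
  induction m with
  | zero => simp
  | succ e ih =>
    have h : (e+1)*n + i = (e*n + i) + n := by ring
    rw [h, hper, ih]

lemma rr_periodic_sum (n : ℕ) (g : ℕ → ℕ) (hper : ∀ a, g (a + n) = g a) (m : ℕ) :
    ∑ a ∈ range (m*n), g a = m * ∑ a ∈ range n, g a := by
  induction m with
  | zero => simp
  | succ e ih =>
    have h : (e+1)*n = e*n + n := by ring
    rw [h, Finset.range_eq_Ico,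
      ← Finset.sum_Ico_consecutive g (Nat.zero_le (e*n)) (Nat.le_add_right (e*n) n),
      Finset.sum_Ico_eq_sum_range, Finset.sum_Ico_eq_sum_range,
      show e*n + n - e*n = n from by omega, show e*n - 0 = e*n from by omega]
    simp only [Nat.zero_add, zero_add]
    rw [ih]
    have h2 : ∀ j ∈ range n, g (e*n + j) = g j := fun j _ => rr_shift n g hper e j
    rw [Finset.sum_congr rfl h2, Nat.succ_mul]

lemma rr_reindex (N : ℕ) (hN : 1 ≤ N) (g : ℕ → ℕ) :
    (∑ i ∈ Finset.Icc 2 N, g (i-1)) + g 0 = ∑ a ∈ range N, g a := by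
  have h1 : Finset.Icc 2 N = Finset.Ico 2 (N+1) := by rw [Finset.Ico_add_one_right_eq_Icc]
  rw [h1, Finset.sum_Ico_eq_sum_range]
  obtain ⟨M, rfl⟩ : ∃ M, N = M + 1 := ⟨N-1, by omega⟩
  rw [Finset.sum_range_succ', show M+1+1-2 = M from by omega]
  congr 1
  refine Finset.sum_congr rfl fun i _ => by rw [show 2+i-1 = i+1 from by omega]

lemma rr_tendsto (a b c : ℝ) (hc : 0 < c) :
    Tendsto (fun m : ℕ => ((m:ℝ)*a - b)/((m:ℝ)*c - 1)) atTop (nhds (a/c)) := by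
  have hb : Tendsto (fun m : ℕ => b/(m:ℝ)) atTop (nhds 0) :=
    tendsto_const_div_atTop_nhds_zero_nat b
  have h1' : Tendsto (fun m : ℕ => 1/(m:ℝ)) atTop (nhds 0) :=
    tendsto_const_div_atTop_nhds_zero_nat 1
  have h1 : Tendsto (fun m : ℕ => (a - b/(m:ℝ))/(c - 1/(m:ℝ))) atTop (nhds (a/c)) := by
    have := Tendsto.div ((tendsto_const_nhds (x := a)).sub hb)
      ((tendsto_const_nhds (x := c)).sub h1') (by simpa using hc.ne')
    rw [sub_zero, sub_zero] at this
    exact this.congr (fun _ => rfl)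
  apply h1.congr'
  filter_upwards [eventually_ge_atTop 1] with m hm
  have hm0 : (m:ℝ) ≠ 0 := by
    have : (1:ℝ) ≤ (m:ℝ) := by exact_mod_cast hm
    linarith
  rcases eq_or_ne (c - 1/(m:ℝ)) 0 with hz | hz
  · have hz2 : (m:ℝ)*c - 1 = 0 := by
      have : (m:ℝ) * (c - 1/(m:ℝ)) = (m:ℝ)*c - 1 := by field_simp
      rw [← this, hz, mul_zero]
    rw [hz, hz2, div_zero, div_zero]
  · have hz2 : (m:ℝ)*c - 1 ≠ 0 := by
      intro h
      apply hz
      have : (m:ℝ) * (c - 1/(m:ℝ)) = (m:ℝ)*c - 1 := by field_simp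
      rw [h] at this
      have h2 := mul_eq_zero.mp this
      rcases h2 with h2 | h2
      · exact absurd h2 hm0
      · exact h2
    rw [div_eq_div_iff hz hz2]
    field_simp

lemma rr_core (n d : ℕ) (hd : 2 ≤ d) (hn : 2*d ≤ n) (hgcd : Nat.gcd d n = 1) :
    6 * (∑ a ∈ range n, (((range d).filter (fun j => (a * d + j) % n < d)).card)^2)
      = 6*(d*d) + 2*(d*(d-1)*(2*d-1)) := by
  haveI : NeZero n := ⟨by omega⟩
  set ccnt : ZMod n → ℕ := fun x => ((range d).filter (fun j : ℕ => (x + (j : ZMod n)).val < d)).card with hccnt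
  have hc1 : ∀ a : ℕ, ((range d).filter (fun j => (a * d + j) % n < d)).card
      = ccnt ((a : ZMod n) * (d : ZMod n)) := by
    intro a
    rw [hccnt]
    congr 1
    apply filter_congr
    intro j _
    have : ((a : ZMod n) * (d : ZMod n) + (j : ZMod n)) = ((a * d + j : ℕ) : ZMod n) := by
      push_cast; ring
    rw [this, ZMod.val_natCast]
  have hc2 : ∀ k : ℕ, ccnt ((k : ZMod n)) = ((range d).filter (fun k' => (k + k') % n < d)).card := by
    intro k
    simp only [hccnt]
    congr 1
    apply filter_congr
    intro j _
    have : ((k : ZMod n) + (j : ZMod n)) = ((k + j : ℕ) : ZMod n) := by push_cast; ring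
    rw [this, ZMod.val_natCast]
  calc 6 * (∑ a ∈ range n, (((range d).filter (fun j => (a * d + j) % n < d)).card)^2)
      = 6 * (∑ a ∈ range n, (fun x : ZMod n => (ccnt (x * (d : ZMod n)))^2) (a : ZMod n)) := by
        simp only [hc1]
    _ = 6 * (∑ x : ZMod n, (ccnt (x * (d : ZMod n)))^2) := by
        rw [rr_zsum n (fun x => (ccnt (x * (d : ZMod n)))^2)]
    _ = 6 * (∑ x : ZMod n, (ccnt x)^2) := by
        rw [rr_unit_sum n d hgcd (fun x => (ccnt x)^2)]
    _ = 6 * (∑ k ∈ range n, (ccnt (k : ZMod n))^2) := by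
        rw [rr_zsum n (fun x => (ccnt x)^2)]
    _ = 6 * (∑ k ∈ range n, (((range d).filter (fun j => (k + j) % n < d)).card)^2) := by
        simp only [hc2]
    _ = 6*(d*d) + 2*(d*(d-1)*(2*d-1)) := by
        have expand : ∀ k : ℕ, (((range d).filter (fun j => (k + j) % n < d)).card)^2
            = ∑ j1 ∈ range d, ∑ j2 ∈ range d,
                (if (k + j1) % n < d ∧ (k + j2) % n < d then 1 else 0) := by
          intro k
          rw [pow_two, Finset.card_filter, Finset.sum_mul_sum]
          refine Finset.sum_congr rfl fun j1 _ => Finset.sum_congr rfl fun j2 _ => ?_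
          split_ifs <;> simp_all
        simp only [expand]
        rw [Finset.sum_comm]
        have swap2 : ∀ j1 ∈ range d, (∑ k ∈ range n, ∑ j2 ∈ range d,
              (if (k + j1) % n < d ∧ (k + j2) % n < d then 1 else 0))
            = ∑ j2 ∈ range d, ((d - max j1 j2) + min j1 j2) := by
          intro j1 hj1
          rw [Finset.sum_comm]
          refine Finset.sum_congr rfl fun j2 hj2 => ?_
          rw [← Finset.card_filter]
          exact rr_count n d j1 j2 hn (mem_range.mp hj1) (mem_range.mp hj2)
        rw [Finset.sum_congr rfl swap2]
        have hds := rr_dsum d d le_rfl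
        set T := ∑ j1 ∈ range d, ∑ j2 ∈ range d, ((d - max j1 j2) + min j1 j2) with hT
        zify [show 1 ≤ d by omega, show 1 ≤ 2*d by omega] at hds ⊢
        linear_combination hds

/-- Overlap diversity factor of the round-robin policy: with `T = m·n` jobs and blocks
`B i = {((i-1)·d + j) mod n : j < d}`, one has
`∑_{i=2}^{T} |B 1 ∩ B i|² = (m-1)·d² + m·d(d-1)(2d-1)/3`, and the average squared
overlap `(∑_{i=2}^{T} |B 1 ∩ B i|²)/(T-1)` converges to `d(2d²+1)/(3n)` as `m → ∞`
(ODF_round-robin = 3n/(d(2d²+1))). -/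
theorem roundRobin_ODF (n d : ℕ) (hd : 2 ≤ d) (hn : 2 * d ≤ n)
    (hgcd : Nat.gcd d n = 1)
    (B : ℕ → Finset (ZMod n))
    (hB : ∀ i : ℕ, B i = (Finset.range d).image (fun j => (((i - 1) * d + j : ℕ) : ZMod n))) :
    (∀ m : ℕ, 1 ≤ m →
      (∑ i ∈ Finset.Icc 2 (m * n), ((B 1 ∩ B i).card : ℝ) ^ 2)
        = ((m : ℝ) - 1) * (d : ℝ) ^ 2
          + (m : ℝ) * (d : ℝ) * ((d : ℝ) - 1) * (2 * (d : ℝ) - 1) / 3) ∧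
    Tendsto (fun m : ℕ =>
        (∑ i ∈ Finset.Icc 2 (m * n), ((B 1 ∩ B i).card : ℝ) ^ 2) / ((m : ℝ) * n - 1))
      atTop (nhds ((d : ℝ) * (2 * (d : ℝ) ^ 2 + 1) / (3 * n))) := by
  haveI : NeZero n := ⟨by omega⟩
  set g : ℕ → ℕ := fun a => (((range d).filter (fun j => (a * d + j) % n < d)).card)^2 with hg
  have hper : ∀ a, g (a + n) = g a := by
    intro a
    simp only [hg]
    congr 2
    apply filter_congr
    intro j _
    rw [show (a + n) * d + j = (a*d + j) + d*n from by ring, Nat.add_mul_mod_self_right]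
  have hg0 : g 0 = d^2 := by
    simp only [hg]
    congr 1
    rw [Finset.filter_true_of_mem, Finset.card_range]
    intro j hj
    have hjd := mem_range.mp hj
    rw [zero_mul, zero_add, Nat.mod_eq_of_lt (by omega)]
    exact hjd
  -- key nat identity for m ≥ 1
  have keynat : ∀ m : ℕ, 1 ≤ m →
      (∑ i ∈ Finset.Icc 2 (m*n), g (i-1)) + d^2 = m * ∑ a ∈ range n, g a := by
    intro m hm
    rw [← hg0, rr_reindex (m*n) (by nlinarith) g, rr_periodic_sum n g hper m]
  have hcardR : ∀ m : ℕ, (∑ i ∈ Finset.Icc 2 (m * n), ((B 1 ∩ B i).card : ℝ) ^ 2)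
      = ((∑ i ∈ Finset.Icc 2 (m*n), g (i-1) : ℕ) : ℝ) := by
    intro m
    push_cast
    refine Finset.sum_congr rfl fun i _ => ?_
    rw [rr_card n d (by omega) B hB i]
    simp only [hg]
    push_cast
    rfl
  have hcore := rr_core n d hd hn hgcd
  set NS : ℕ := ∑ a ∈ range n, g a with hNS
  have e2 : 6 * (NS : ℝ) = 6*(d:ℝ)^2 + 2*((d:ℝ)*((d:ℝ)-1)*(2*(d:ℝ)-1)) := by
    have : ((6 * NS : ℕ) : ℝ) = ((6*(d*d) + 2*(d*(d-1)*(2*d-1)) : ℕ) : ℝ) := by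
      exact_mod_cast congrArg (fun x : ℕ => (x:ℝ)) hcore
    push_cast [Nat.cast_sub (show 1 ≤ d by omega), Nat.cast_sub (show 1 ≤ 2*d by omega)] at this
    linarith [this]
  have part1 : ∀ m : ℕ, 1 ≤ m →
      (∑ i ∈ Finset.Icc 2 (m * n), ((B 1 ∩ B i).card : ℝ) ^ 2)
        = ((m : ℝ) - 1) * (d : ℝ) ^ 2
          + (m : ℝ) * (d : ℝ) * ((d : ℝ) - 1) * (2 * (d : ℝ) - 1) / 3 := by
    intro m hm
    have e1 : ((∑ i ∈ Finset.Icc 2 (m*n), g (i-1) : ℕ) : ℝ) + (d:ℝ)^2 = (m:ℝ) * (NS:ℝ) := by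
      exact_mod_cast congrArg (fun x : ℕ => (x : ℝ)) (keynat m hm)
    rw [hcardR m]
    linear_combination e1 + ((m:ℝ)/6) * e2
  refine ⟨part1, ?_⟩
  have hn0 : (0:ℝ) < (n:ℝ) := by exact_mod_cast (show 0 < n by omega)
  set a : ℝ := (d:ℝ)^2 + (d:ℝ)*((d:ℝ)-1)*(2*(d:ℝ)-1)/3 with ha
  have htd := rr_tendsto a ((d:ℝ)^2) (n:ℝ) hn0
  have hlim : a / (n:ℝ) = (d : ℝ) * (2 * (d : ℝ) ^ 2 + 1) / (3 * n) := by
    rw [ha]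
    field_simp
    ring
  rw [hlim] at htd
  apply htd.congr'
  filter_upwards [eventually_ge_atTop 1] with m hm
  rw [part1 m hm]
  ring
end
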